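/- Let S and S⁽ⁿ⁾ be as above with a₁ < a₂ < F(S), and q defined by δ = F(S) - a₁ = q(a₂ - a₁) + τ, 0 ≤ τ < a₂ - a₁. Then for every n ≥ q, F(S⁽ⁿ⁺¹⁾) = F(S⁽ⁿ⁾) + a₁ and F(S⁽ⁿ⁺¹⁾) < (n+1)·a₂. -/

import Mathlib

/-- `S⁽ⁿ⁾ = {0} ∪ {a·α : α ∈ ℕʳ, |α| ≥ n}`; in particular `S = S⁽¹⁾`. -/
def Sn {r : ℕ} (a : Fin r → ℕ) (n : ℕ) : Set ℕ :=
  {0} ∪ {s | ∃ α : Fin r → ℕ, n ≤ ∑ i, α i ∧ s = ∑ i, a i * α i}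

lemma bump_sum (r : ℕ) (a α : Fin (r+2) → ℕ) :
    ∑ i, a i * (fun j => if j = 0 then α j + 1 else α j) i = (∑ i, a i * α i) + a 0 := by
  have h : ∀ i ∈ Finset.univ, a i * (fun j => if j = 0 then α j + 1 else α j) i
      = a i * α i + (if i = (0:Fin (r+2)) then a i else 0) := by
    intro i _; by_cases hi : i = 0 <;> simp [hi, mul_add]
  rw [Finset.sum_congr rfl h, Finset.sum_add_distrib,
    Finset.sum_ite_eq' Finset.univ (0:Fin (r+2)) a]
  simp

lemma bump_deg (r : ℕ) (α : Fin (r+2) → ℕ) :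
    ∑ i, (fun j => if j = 0 then α j + 1 else α j) i = (∑ i, α i) + 1 := by
  have h : ∀ i ∈ Finset.univ, (fun j => if j = 0 then α j + 1 else α j) i
      = α i + (if i = (0:Fin (r+2)) then 1 else 0) := by
    intro i _; by_cases hi : i = 0 <;> simp [hi]
  rw [Finset.sum_congr rfl h, Finset.sum_add_distrib,
    Finset.sum_ite_eq' Finset.univ (0:Fin (r+2)) (fun _ => 1)]
  simp

theorem stmt_6 (r : ℕ) (a : Fin (r + 2) → ℕ)
    (ha : StrictMono a) (h1 : 1 < a 0)
    (hgcd : Finset.univ.gcd a = 1)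
    (hmin : ∀ i, a i ∉ AddSubmonoid.closure (a '' {i}ᶜ))
    (F : ℕ) (hF : IsGreatest {m : ℕ | m ∉ Sn a 1} F) (hFa2 : a 1 < F)
    (q τ : ℕ) (hq : 1 ≤ q) (hτ : τ < a 1 - a 0)
    (hdecomp : F - a 0 = q * (a 1 - a 0) + τ)
    (n : ℕ) (hn : q ≤ n) (Fn : ℕ)
    (hFn : IsGreatest {m : ℕ | m ∉ Sn a n} Fn) :
    IsGreatest {m : ℕ | m ∉ Sn a (n + 1)} (Fn + a 0) ∧
    Fn + a 0 < (n + 1) * a 1 := by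
  have ha01 : a 0 < a 1 := ha (by simp [Fin.lt_def])
  have hFa0 : a 0 < F := lt_trans ha01 hFa2
  set d := a 1 - a 0 with hdd
  have hd : a 0 + d = a 1 := by omega
  have hFeq : F = a 0 + q * d + τ := by omega
  -- key inequality
  have hK : F + n * a 0 < (n + 1) * a 1 := by
    have h1' : q * d + τ < (n + 1) * d :=
      calc q * d + τ < q * d + d := by omega
      _ = (q+1) * d := by ring
      _ ≤ (n+1) * d := Nat.mul_le_mul_right d (by omega)
    have h2 : (n+1) * a 1 = (n+1) * a 0 + (n+1) * d := by rw [← hd]; ring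
    have h3 : (n+1) * a 0 = n * a 0 + a 0 := by ring
    omega
  -- Claim D
  have claimD : ∀ k m : ℕ, F + k * a 0 < m →
      ∃ α : Fin (r+2) → ℕ, k + 1 ≤ ∑ i, α i ∧ m = ∑ i, a i * α i := by
    intro k
    induction k with
    | zero =>
      intro m hm
      have hmem : m ∈ Sn a 1 := by
        by_contra h
        exact absurd (hF.2 h) (by omega)
      rcases hmem with h0 | ⟨α, hα1, hα2⟩
      · simp at h0; omega
      · exact ⟨α, hα1, hα2⟩
    | succ k ih =>
      intro m hm
      obtain ⟨α, hα1, hα2⟩ := ih (m - a 0) (by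
        have : (k+1) * a 0 = k * a 0 + a 0 := by ring
        omega)
      refine ⟨fun j => if j = 0 then α j + 1 else α j, ?_, ?_⟩
      · rw [bump_deg]; omega
      · rw [bump_sum, ← hα2]
        have : (k+1) * a 0 = k * a 0 + a 0 := by ring
        omega
  -- F ≤ Fn
  have hsub : ∀ m : ℕ, m ∈ Sn a n → m ∈ Sn a 1 := by
    rintro m (h0 | ⟨α, hα1, hα2⟩)
    · exact Or.inl h0
    · exact Or.inr ⟨α, by omega, hα2⟩
  have hFFn : F ≤ Fn := hFn.2 (fun h => hF.1 (hsub F h))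
  -- the bound
  have hbound : Fn + a 0 < (n + 1) * a 1 := by
    by_contra hc
    push_neg at hc
    obtain ⟨n', rfl⟩ : ∃ n', n = n' + 1 := ⟨n - 1, by omega⟩
    obtain ⟨α, hα1, hα2⟩ := claimD n' Fn (by
      have : (n'+1+1) * a 1 = (n'+1) * a 1 + a 1 := by ring
      have hK' := hK
      nlinarith [hK])
    exact hFn.1 (Or.inr ⟨α, hα1, hα2⟩)
  refine ⟨⟨?_, ?_⟩, hbound⟩
  · -- Fn + a 0 ∉ Sn a (n+1)
    rintro (h0 | ⟨α, hα1, hα2⟩)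
    · simp at h0; omega
    · by_cases hα0 : α 0 = 0
      · -- all mass on indices ≥ 1, so Fn + a 0 ≥ (n+1) * a 1
        have hge : ∀ i ∈ Finset.univ, a 1 * α i ≤ a i * α i := by
          intro i _
          by_cases hi : i = 0
          · simp [hi, hα0]
          · have h1i : (1:Fin (r+2)) ≤ i := by
              rw [Fin.le_def, Fin.val_one]
              have : i.val ≠ 0 := by intro h; apply hi; ext; simp [h]
              omega
            exact Nat.mul_le_mul_right _ (ha.monotone h1i)
        have : (n+1) * a 1 ≤ Fn + a 0 := by
          calc (n+1) * a 1 ≤ (∑ i, α i) * a 1 := Nat.mul_le_mul_right _ hα1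
          _ = ∑ i, a 1 * α i := by rw [Finset.sum_mul]; exact Finset.sum_congr rfl (fun i _ => by ring)
          _ ≤ ∑ i, a i * α i := Finset.sum_le_sum hge
          _ = Fn + a 0 := hα2.symm
        omega
      · -- α 0 ≥ 1 : Fn ∈ Sn a n, contradiction
        set α' : Fin (r+2) → ℕ := fun j => if j = 0 then α j - 1 else α j with hα'
        have hback : (fun j => if j = 0 then α' j + 1 else α' j) = α := by
          funext j
          by_cases hj : j = 0 <;> simp [hα', hj]
          omega
        have hdeg : ∑ i, α i = (∑ i, α' i) + 1 := by
          conv_lhs => rw [← hback]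
          exact bump_deg r α'
        have hsum : ∑ i, a i * α i = (∑ i, a i * α' i) + a 0 := by
          conv_lhs => rw [← hback]
          exact bump_sum r a α'
        exact hFn.1 (Or.inr ⟨α', by omega, by omega⟩)
  · -- upper bound
    intro m hm
    by_contra hc
    push_neg at hc
    have hmem : m - a 0 ∈ Sn a n := by
      by_contra h
      have := hFn.2 h
      omega
    rcases hmem with h0 | ⟨α, hα1, hα2⟩
    · simp at h0; omega
    · refine hm (Or.inr ⟨fun j => if j = 0 then α j + 1 else α j, ?_, ?_⟩)
      · rw [bump_deg]; omega
      · rw [bump_sum, ← hα2]; omega
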